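/- arXiv:1902.01383 — 2 statements merged into one kernel-verified Lean document; each statement's English description precedes it below -/
import Mathlib

section
/- Let $V$ be a finite-dimensional real vector space, fix $l$, and let $(W_m)$ be a sequence in the Grassmannian $\mathrm{Gr}_l(V)$ of $l$-dimensional subspaces, and $W \in \mathrm{Gr}_l(V)$. Then $W_m \to W$ in the Chabauty topology if and only if the following condition holds: for every subsequence $(m_k)$ and points $w_{m_k} \in W_{m_k}$ with $w_{m_k} \to w$ in $V$, one has $w \in W$. -/
open Module

/-- The Chabauty–Fell topology on the space of linear subspaces (each of which
is a closed subset) of a finite-dimensional real vector space. -/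
def fellTopologyGr (E : Type*) [NormedAddCommGroup E] [NormedSpace ℝ E] :
    TopologicalSpace (Submodule ℝ E) :=
  TopologicalSpace.generateFrom
    ({S | ∃ U : Set E, IsOpen U ∧ S = {W : Submodule ℝ E | ((W : Set E) ∩ U).Nonempty}} ∪
     {S | ∃ K : Set E, IsCompact K ∧ S = {W : Submodule ℝ E | (W : Set E) ∩ K = ∅}})


open Module Filter Topology Metric Set

private lemma keyLemma {F : Type*} [NormedAddCommGroup F] [InnerProductSpace ℝ F]
    [FiniteDimensional ℝ F] (l : ℕ) (U : ℕ → Submodule ℝ F) (W' : Submodule ℝ F)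
    (hU : ∀ j, finrank ℝ (U j) = l) (hW : finrank ℝ W' = l)
    (hC1 : ∀ ψ : ℕ → ℕ, StrictMono ψ → ∀ u : ℕ → F, (∀ j, u j ∈ U (ψ j)) →
      ∀ x : F, Tendsto u atTop (nhds x) → x ∈ W')
    (v : F) (hv : v ∈ W') (ε : ℝ) (hε : 0 < ε) :
    ∃ j, ∃ u ∈ U j, dist u v < ε := by
  rcases Nat.eq_zero_or_pos l with hl | hl
  · -- l = 0 : W' = ⊥, so v = 0, and 0 ∈ U 0
    subst hl
    have : W' = ⊥ := Submodule.finrank_eq_zero.mp hW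
    subst this
    have hv0 : v = 0 := (Submodule.mem_bot ℝ).mp hv
    exact ⟨0, 0, (U 0).zero_mem, by simpa [hv0] using hε⟩
  -- choose orthonormal bases of the U j
  have bas : ∀ j, ∃ c : Fin l → F, (∀ i, c i ∈ U j) ∧ Orthonormal ℝ c := by
    intro j
    let B := (stdOrthonormalBasis ℝ (U j)).reindex (finCongr (hU j))
    exact ⟨fun i => (B i : F), fun i => (B i).2,
      B.orthonormal.comp_linearIsometry (U j).subtypeₗᵢ⟩
  choose c hcmem hcon using bas
  -- compactness: extract a convergent subsequence of bases
  have hcompact : IsCompact (Set.pi (Set.univ : Set (Fin l)) fun _ => closedBall (0 : F) 1) :=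
    isCompact_univ_pi fun _ => isCompact_closedBall _ _
  have hmem : ∀ j, c j ∈ Set.pi (Set.univ : Set (Fin l)) fun _ => closedBall (0 : F) 1 := by
    intro j
    intro i _
    simp [mem_closedBall, dist_zero_right, (hcon j).1 i]
  obtain ⟨b, _, ψ, hψ, hbtend⟩ := hcompact.tendsto_subseq hmem
  have htendi : ∀ i, Tendsto (fun j => c (ψ j) i) atTop (nhds (b i)) := by
    intro i
    exact (tendsto_pi_nhds.mp hbtend) i
  -- each coordinate limit is in W'
  have hbW : ∀ i, b i ∈ W' := fun i =>
    hC1 ψ hψ (fun j => c (ψ j) i) (fun j => hcmem (ψ j) i) (b i) (htendi i)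
  -- b is orthonormal
  have hbon : Orthonormal ℝ b := by
    rw [orthonormal_iff_ite]
    intro i i'
    have h1 : Tendsto (fun j => (inner ℝ (c (ψ j) i) (c (ψ j) i') : ℝ)) atTop
        (nhds (inner ℝ (b i) (b i'))) := (htendi i).inner (htendi i')
    have h2 : (fun j => (inner ℝ (c (ψ j) i) (c (ψ j) i') : ℝ)) =
        fun _ => if i = i' then (1 : ℝ) else 0 := by
      funext j
      exact orthonormal_iff_ite.mp (hcon (ψ j)) i i'
    rw [h2] at h1
    exact (tendsto_nhds_unique tendsto_const_nhds h1).symm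
  -- b gives a basis of W'
  haveI : Nonempty (Fin l) := ⟨⟨0, hl⟩⟩
  set b' : Fin l → W' := fun i => ⟨b i, hbW i⟩ with hb'
  have hli : LinearIndependent ℝ b' := by
    have : LinearIndependent ℝ (W'.subtype ∘ b') := by
      have : W'.subtype ∘ b' = b := rfl
      rw [this]
      exact hbon.linearIndependent
    exact LinearIndependent.of_comp _ this
  let B : Basis (Fin l) ℝ W' := basisOfLinearIndependentOfCardEqFinrank hli (by simp [hW])
  have hBb : ∀ i, B i = b' i := by
    intro i
    rw [show B = basisOfLinearIndependentOfCardEqFinrank hli (by simp [hW]) from rfl,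
      coe_basisOfLinearIndependentOfCardEqFinrank]
  set d : Fin l → ℝ := fun i => B.repr ⟨v, hv⟩ i with hd
  have hvsum : v = ∑ i, d i • b i := by
    have h0 : (⟨v, hv⟩ : W') = ∑ i, d i • B i := (B.sum_repr ⟨v, hv⟩).symm
    have h1 : v = ((∑ i, d i • B i : W') : F) := by rw [← h0]
    rw [h1]
    push_cast
    exact Finset.sum_congr rfl fun i _ => by rw [hBb i]
  -- approximate v
  set u : ℕ → F := fun j => ∑ i, d i • c (ψ j) i with hu
  have humem : ∀ j, u j ∈ U (ψ j) := fun j =>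
    Submodule.sum_mem _ fun i _ => Submodule.smul_mem _ _ (hcmem (ψ j) i)
  have hutend : Tendsto u atTop (nhds v) := by
    rw [hvsum]
    exact tendsto_finset_sum _ fun i _ => (htendi i).const_smul (d i)
  have := (Metric.tendsto_nhds.mp hutend ε hε).exists
  obtain ⟨j, hj⟩ := this
  exact ⟨ψ j, u j, humem j, hj⟩

/-- Within the Grassmannian `Gr_l(V)` of `l`-dimensional subspaces, Chabauty
convergence `W_m → W` is equivalent to condition (C1): every convergent
sequence of points `w_{m_k} ∈ W_{m_k}` has its limit in `W`. -/
theorem stmt9 (E : Type*) [NormedAddCommGroup E] [NormedSpace ℝ E]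
    [FiniteDimensional ℝ E] (l : ℕ)
    (W : ℕ → Submodule ℝ E) (W' : Submodule ℝ E)
    (hdim : ∀ m, finrank ℝ (W m) = l) (hdim' : finrank ℝ W' = l) :
    Filter.Tendsto W Filter.atTop (@nhds _ (fellTopologyGr E) W') ↔
      ∀ φ : ℕ → ℕ, StrictMono φ → ∀ w : ℕ → E, (∀ j, w j ∈ W (φ j)) →
        ∀ x : E, Filter.Tendsto w Filter.atTop (nhds x) → x ∈ W' := by
  rw [fellTopologyGr, TopologicalSpace.tendsto_nhds_generateFrom_iff]
  constructor
  · -- Chabauty convergence ⇒ (C1)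
    intro h φ hφ w hw x hx
    by_contra hx'
    have hcl : IsClosed (W' : Set E) := Submodule.closed_of_finiteDimensional W'
    obtain ⟨ε, hε, hball⟩ := Metric.isOpen_iff.mp hcl.isOpen_compl x hx'
    set K := closedBall x (ε / 2) with hK
    have hKc : IsCompact K := isCompact_closedBall _ _
    have hdisj : (W' : Set E) ∩ K = ∅ := by
      rw [Set.eq_empty_iff_forall_notMem]
      rintro y ⟨hy1, hy2⟩
      exact hball (mem_ball.mpr (lt_of_le_of_lt (mem_closedBall.mp hy2) (by linarith))) hy1
    have hS : W ⁻¹' {V : Submodule ℝ E | (V : Set E) ∩ K = ∅} ∈ atTop :=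
      h _ (Or.inr ⟨K, hKc, rfl⟩) hdisj
    obtain ⟨N, hN⟩ := eventually_atTop.mp hS
    have : ∀ᶠ j in atTop, w j ∈ K := by
      have := Metric.tendsto_nhds.mp hx (ε / 2) (by linarith)
      filter_upwards [this] with j hj
      exact mem_closedBall.mpr hj.le
    obtain ⟨j, hjN, hjK⟩ := (this.and (eventually_ge_atTop N)).exists
    have hempty : (W (φ j) : Set E) ∩ K = ∅ := hN _ (le_trans hjK (hφ.le_apply))
    rw [Set.eq_empty_iff_forall_notMem] at hempty
    exact hempty (w j) ⟨hw j, hjN⟩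
  · -- (C1) ⇒ Chabauty convergence
    intro hC1 s hs hW's
    rcases hs with ⟨U, hUopen, rfl⟩ | ⟨K, hKc, rfl⟩
    · -- open sets condition
      obtain ⟨v, hvW, hvU⟩ := hW's
      obtain ⟨ε, hε, hball⟩ := Metric.isOpen_iff.mp hUopen v hvU
      show ∀ᶠ m in atTop, ((W m : Set E) ∩ U).Nonempty
      by_contra hcon
      rw [Filter.not_eventually] at hcon
      have hfreq : ∃ᶠ m in atTop, ∀ u ∈ W m, ε ≤ dist u v := by
        refine hcon.mono fun m hm => ?_
        intro u hu
        by_contra hlt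
        exact hm ⟨u, hu, hball (mem_ball.mpr (lt_of_not_ge hlt))⟩
      obtain ⟨φ, hφ, hφP⟩ := Filter.extraction_of_frequently_atTop hfreq
      -- transfer to Euclidean space
      set F := EuclideanSpace ℝ (Fin (finrank ℝ E)) with hF
      set e : E ≃L[ℝ] F := toEuclidean with he
      set U' : ℕ → Submodule ℝ F := fun j =>
        (W (φ j)).map (e.toLinearEquiv : E →ₗ[ℝ] F) with hU'
      have hU'dim : ∀ j, finrank ℝ (U' j) = l := fun j => by
        rw [hU', LinearEquiv.finrank_map_eq e.toLinearEquiv]; exact hdim _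
      have hW'dim : finrank ℝ (W'.map (e.toLinearEquiv : E →ₗ[ℝ] F)) = l := by
        rw [LinearEquiv.finrank_map_eq e.toLinearEquiv]; exact hdim'
      have hC1' : ∀ ψ : ℕ → ℕ, StrictMono ψ → ∀ u : ℕ → F, (∀ j, u j ∈ U' (ψ j)) →
          ∀ x : F, Tendsto u atTop (nhds x) → x ∈ W'.map (e.toLinearEquiv : E →ₗ[ℝ] F) := by
        intro ψ hψ u hu x hx
        have hmem : ∀ j, e.symm (u j) ∈ W (φ (ψ j)) := by
          intro j
          obtain ⟨y, hy, hyeq⟩ := hu j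
          have : e.symm (u j) = y := by
            rw [← hyeq]; exact e.symm_apply_apply y
          rw [this]; exact hy
        have htendsymm : Tendsto (fun j => e.symm (u j)) atTop (nhds (e.symm x)) :=
          (e.symm.continuous.tendsto x).comp hx
        have hx' : e.symm x ∈ W' :=
          hC1 (φ ∘ ψ) (hφ.comp hψ) _ hmem _ htendsymm
        exact ⟨e.symm x, hx', e.apply_symm_apply x⟩
      -- choose δ by continuity of e.symm at e v
      have hcont : ContinuousAt (⇑e.symm) (e v) := e.symm.continuous.continuousAt
      obtain ⟨δ, hδ, hδball⟩ := Metric.continuousAt_iff.mp hcont ε hε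
      obtain ⟨j, u', hu'mem, hu'dist⟩ := keyLemma l U' (W'.map (e.toLinearEquiv : E →ₗ[ℝ] F))
        hU'dim hW'dim hC1' (e v) ⟨v, hvW, rfl⟩ δ hδ
      obtain ⟨y, hy, hyeq⟩ := hu'mem
      have hey : e.symm u' = y := by rw [← hyeq]; exact e.symm_apply_apply y
      have hd : dist (e.symm u') v < ε := by
        have := hδball hu'dist
        rwa [e.symm_apply_apply v] at this
      exact absurd hd (not_lt.mpr (hφP j _ (hey ▸ hy)))
    · -- compact sets condition
      show ∀ᶠ m in atTop, (W m : Set E) ∩ K = ∅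
      by_contra hcon
      rw [Filter.not_eventually] at hcon
      have hfreq : ∃ᶠ m in atTop, ((W m : Set E) ∩ K).Nonempty :=
        hcon.mono fun m hm => Set.nonempty_iff_ne_empty.mpr hm
      obtain ⟨φ, hφ, hφP⟩ := Filter.extraction_of_frequently_atTop hfreq
      choose w hw1 hw2 using hφP
      obtain ⟨x, hxK, ψ, hψ, hxt⟩ := hKc.tendsto_subseq hw2
      have hxW : x ∈ W' :=
        hC1 (φ ∘ ψ) (hφ.comp hψ) (fun j => w (ψ j)) (fun j => hw1 (ψ j)) x hxt
      have hW'K : (W' : Set E) ∩ K = ∅ := hW's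
      rw [Set.eq_empty_iff_forall_notMem] at hW'K
      exact hW'K x ⟨hxW, hxK⟩
end

section
/- Let $V$ be a finite-dimensional real vector space, let $0 \leq l \leq k \leq \dim V - 1$, and let $X_{k,l} := \{(p_0,\dots,p_k) \in \mathbb{P}(V)^{k+1} \mid \dim \mathrm{span}(p_0,\dots,p_k) = l+1\}$. Then the map $\mathrm{span}: X_{k,l} \to \mathrm{Gr}_{l+1}(V)$ sending a tuple of lines to the linear span of their union is continuous. Consequently, $\mathrm{span}: \mathbb{P}(V)^{k+1} \to \mathrm{Gr}(V)$ is a Borel measurable map. -/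
open Module

/-- The quotient topology on real projective space. -/
noncomputable instance projTop (E : Type*) [NormedAddCommGroup E] [NormedSpace ℝ E] :
    TopologicalSpace (Projectivization ℝ E) :=
  TopologicalSpace.coinduced (Projectivization.mk' ℝ) inferInstance

/-- The span of a tuple of lines (points of projective space). -/
noncomputable def spanMap (E : Type*) [NormedAddCommGroup E] [NormedSpace ℝ E] (k : ℕ)
    (p : Fin (k + 1) → Projectivization ℝ E) : Submodule ℝ E :=
  ⨆ i, (p i).submodule

section Aux

open Set Submodule Projectivization TopologicalSpace Topology

variable {E : Type*} [NormedAddCommGroup E] [NormedSpace ℝ E]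

lemma aux_isOpenMap_mk' : IsOpenMap (Projectivization.mk' ℝ : {v : E // v ≠ 0} → Projectivization ℝ E) := by
  intro U hU
  rw [show projTop E = TopologicalSpace.coinduced (Projectivization.mk' ℝ) inferInstance from rfl,
    isOpen_coinduced]
  have key : (Projectivization.mk' ℝ) ⁻¹' (Projectivization.mk' ℝ '' U) =
      ⋃ c : ℝˣ, (fun u : {v : E // v ≠ 0} =>
        (⟨(c : ℝ)⁻¹ • u.1, smul_ne_zero (inv_ne_zero c.ne_zero) u.2⟩ : {v : E // v ≠ 0})) ⁻¹' U := by
    ext x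
    simp only [Set.mem_preimage, Set.mem_image, Set.mem_iUnion]
    constructor
    · rintro ⟨u, hu, huv⟩
      have := (Projectivization.mk_eq_mk_iff ℝ u.1 x.1 u.2 x.2).1 (by
        rwa [← Projectivization.mk'_eq_mk, ← Projectivization.mk'_eq_mk])
      obtain ⟨c, hc⟩ := this
      refine ⟨c⁻¹, ?_⟩
      have hval : ((c⁻¹ : ℝˣ) : ℝ)⁻¹ • x.1 = u.1 := by
        rw [Units.val_inv_eq_inv_val, inv_inv, ← Units.smul_def, hc]
      exact Set.mem_of_eq_of_mem (Subtype.ext hval) hu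
    · rintro ⟨c, hc⟩
      refine ⟨_, hc, ?_⟩
      rw [Projectivization.mk'_eq_mk, Projectivization.mk'_eq_mk]
      rw [Projectivization.mk_eq_mk_iff]
      exact ⟨c⁻¹, by rw [Units.smul_def, Units.val_inv_eq_inv_val]⟩
  rw [key]
  refine isOpen_iUnion fun c => ?_
  exact hU.preimage (by
    apply Continuous.subtype_mk
    exact continuous_const.smul continuous_subtype_val)

lemma aux_continuous_mk' : Continuous (Projectivization.mk' ℝ : {v : E // v ≠ 0} → Projectivization ℝ E) :=
  continuous_coinduced_rng

variable (E) in
/-- The product of the projectivization quotient maps. -/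
noncomputable def mkP (k : ℕ) (w : Fin (k + 1) → {v : E // v ≠ 0}) : Fin (k + 1) → Projectivization ℝ E :=
  fun i => Projectivization.mk' ℝ (w i)

lemma aux_surjective_mk' :
    Function.Surjective (Projectivization.mk' ℝ : {v : E // v ≠ 0} → Projectivization ℝ E) :=
  fun p => ⟨⟨p.rep, p.rep_nonzero⟩, by
    rw [Projectivization.mk'_eq_mk]; exact Projectivization.mk_rep p⟩

lemma aux_isOpenMap_mkP (k : ℕ) : IsOpenMap (mkP E k) :=
  IsOpenMap.piMap (fun _ => aux_isOpenMap_mk')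
    (Filter.Eventually.of_forall fun _ => aux_surjective_mk')

lemma aux_continuous_mkP (k : ℕ) : Continuous (mkP E k) :=
  continuous_pi fun i => aux_continuous_mk'.comp (continuous_apply i)

lemma aux_surjective_mkP (k : ℕ) : Function.Surjective (mkP E k) := by
  intro p
  refine ⟨fun i => ⟨(p i).rep, (p i).rep_nonzero⟩, funext fun i => ?_⟩
  simp [mkP, Projectivization.mk'_eq_mk, Projectivization.mk_rep]

lemma aux_isQuotientMap_mkP (k : ℕ) : IsQuotientMap (mkP E k) :=
  (aux_isOpenMap_mkP k).isQuotientMap (aux_continuous_mkP k) (aux_surjective_mkP k)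

lemma spanMap_mkP (k : ℕ) (w : Fin (k + 1) → {v : E // v ≠ 0}) :
    spanMap E k (mkP E k w) = Submodule.span ℝ (Set.range fun i => (w i).1) := by
  rw [Submodule.span_range_eq_iSup]
  simp [spanMap, mkP, Projectivization.mk'_eq_mk, Projectivization.submodule_mk]

variable [FiniteDimensional ℝ E]

lemma aux_isOpen_rank_ge (k m : ℕ) :
    IsOpen {p : Fin (k + 1) → Projectivization ℝ E | m ≤ finrank ℝ (spanMap E k p)} := by
  rw [← (aux_isQuotientMap_mkP (E := E) k).isOpen_preimage]
  have key : (mkP E k) ⁻¹' {p | m ≤ finrank ℝ (spanMap E k p)} =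
      ⋃ ι : Fin m → Fin (k + 1),
        {w : Fin (k + 1) → {v : E // v ≠ 0} |
          LinearIndependent ℝ (fun j => (w (ι j)).1)} := by
    ext w
    simp only [Set.mem_preimage, Set.mem_setOf_eq, Set.mem_iUnion]
    constructor
    · intro hm
      rw [spanMap_mkP] at hm
      set u : Fin (k + 1) → E := fun i => (w i).1 with hu
      obtain ⟨b, hb_sub, hb_span, hb_indep⟩ := exists_linearIndependent ℝ (Set.range u)
      haveI : Fintype b := hb_indep.setFinite.fintype
      have hcard : finrank ℝ (Submodule.span ℝ (Set.range u)) = Fintype.card b := by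
        have h := finrank_span_eq_card hb_indep
        rwa [Subtype.range_coe, hb_span] at h
      have hmb : m ≤ Fintype.card b := by omega
      obtain ⟨emb⟩ : Nonempty (Fin m ↪ b) :=
        Function.Embedding.nonempty_of_card_le (by simpa using hmb)
      choose g hg using fun x : b => Set.mem_range.1 (hb_sub x.2)
      refine ⟨fun j => g (emb j), ?_⟩
      have : (fun j => (w (g (emb j))).1) = fun j => ((emb j : b) : E) := by
        funext j; exact hg (emb j)
      rw [this]
      exact hb_indep.comp emb emb.injective
    · rintro ⟨ι, hι⟩
      rw [spanMap_mkP]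
      set u : Fin (k + 1) → E := fun i => (w i).1 with hu
      set W := Submodule.span ℝ (Set.range u) with hW
      have hmem : ∀ j, u (ι j) ∈ W := fun j => Submodule.subset_span (Set.mem_range_self _)
      have hind : LinearIndependent ℝ (fun j => (⟨u (ι j), hmem j⟩ : W)) := by
        apply LinearIndependent.of_comp W.subtype
        exact hι
      simpa using hind.fintype_card_le_finrank
  rw [key]
  refine isOpen_iUnion fun ι => ?_
  refine isOpen_setOf_linearIndependent.preimage ?_
  exact continuous_pi fun j => continuous_subtype_val.comp (continuous_apply (ι j))

lemma aux_continuousOn (k m : ℕ) :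
    @ContinuousOn (Fin (k + 1) → Projectivization ℝ E) (Submodule ℝ E) _
      (fellTopologyGr E) (spanMap E k) {p | finrank ℝ (spanMap E k p) = m} := by
  intro p hp
  refine tendsto_nhds_generateFrom_iff.2 ?_
  rintro T (⟨U, hU, rfl⟩ | ⟨K, hK, rfl⟩) hfT
  -- common setup: canonical representatives
  all_goals
    set v : Fin (k + 1) → {x : E // x ≠ 0} := fun i => ⟨(p i).rep, (p i).rep_nonzero⟩ with hv
    have hvp : mkP E k v = p := funext fun i => by
      simp [mkP, hv, Projectivization.mk'_eq_mk, Projectivization.mk_rep]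
    have hspan : spanMap E k p = Submodule.span ℝ (Set.range fun i => (v i).1) := by
      rw [← hvp, spanMap_mkP]
  · -- hit an open set: this is open in the whole space
    obtain ⟨x, hxW, hxU⟩ := hfT
    rw [hspan] at hxW
    obtain ⟨c, hc⟩ := (mem_span_range_iff_exists_fun ℝ).1 hxW
    set φ : (Fin (k + 1) → {x : E // x ≠ 0}) → E := fun w => ∑ i, c i • (w i).1 with hφ
    have hφc : Continuous φ := by
      apply continuous_finset_sum
      intro i _
      exact continuous_const.smul (continuous_subtype_val.comp (continuous_apply i))
    have hN : IsOpen (φ ⁻¹' U) := hU.preimage hφc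
    have hvN : v ∈ φ ⁻¹' U := by
      simp only [Set.mem_preimage, hφ]
      rw [hc]; exact hxU
    apply Filter.mem_of_superset (mem_nhdsWithin_of_mem_nhds
      ((aux_isOpenMap_mkP k _ hN).mem_nhds ⟨v, hvN, hvp⟩))
    rintro q ⟨w, hwN, rfl⟩
    refine ⟨φ w, ?_, hwN⟩
    rw [spanMap_mkP]
    apply Submodule.sum_mem
    intro i _
    exact Submodule.smul_mem _ _ (Submodule.subset_span (Set.mem_range_self _))
  · -- miss a compact set
    have hWK : (spanMap E k p : Set E) ∩ K = ∅ := hfT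
    set u : Fin (k + 1) → E := fun i => (v i).1 with hu
    obtain ⟨b, hb_sub, hb_span, hb_indep⟩ := exists_linearIndependent ℝ (Set.range u)
    haveI : Fintype b := hb_indep.setFinite.fintype
    choose g hg using fun x : b => Set.mem_range.1 (hb_sub x.2)
    -- the open set of "independent together with a point of K" configurations
    set O : Set ((Fin (k + 1) → E) × E) :=
      {z | LinearIndependent ℝ (fun o : Option b => Option.casesOn' o z.2 (fun x => z.1 (g x)))}
      with hO
    have hOopen : IsOpen O := by
      refine isOpen_setOf_linearIndependent.preimage ?_
      refine continuous_pi fun o => ?_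
      cases o with
      | none => exact continuous_snd
      | some x => exact (continuous_apply (g x)).comp continuous_fst
    have hbW : Submodule.span ℝ (Set.range ((↑) : b → E)) = spanMap E k p := by
      rw [Subtype.range_coe, hb_span, hspan]
    have hvO : ∀ y ∈ K, ((u, y) : (Fin (k + 1) → E) × E) ∈ O := by
      intro y hy
      have hy' : y ∉ Submodule.span ℝ (Set.range ((↑) : b → E)) := by
        rw [hbW]
        intro hmem
        exact absurd (Set.mem_inter hmem hy) (by rw [hWK]; exact id)
      have : (fun x : b => u (g x)) = ((↑) : b → E) := funext fun x => hg x
      refine linearIndependent_option'.2 ⟨?_, ?_⟩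
      · rw [show (fun x : b => ((u, y).1 (g x))) = ((↑) : b → E) from this]
        exact hb_indep
      · rw [show (fun x : b => ((u, y).1 (g x))) = ((↑) : b → E) from this]
        exact hy'
    obtain ⟨N₁, N₂, hN₁, hN₂, hvN₁, hKN₂, hsub⟩ :=
      generalized_tube_lemma isCompact_singleton hK hOopen
        (by rintro ⟨a, y⟩ ⟨rfl, hy⟩; exact hvO y hy)
    set A : Set (Fin (k + 1) → E) :=
      {w | LinearIndependent ℝ (fun x : b => w (g x))} with hA
    have hAopen : IsOpen A := by
      refine isOpen_setOf_linearIndependent.preimage ?_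
      exact continuous_pi fun x => continuous_apply (g x)
    have hvA : u ∈ A := by
      have : (fun x : b => u (g x)) = ((↑) : b → E) := funext fun x => hg x
      rw [hA, Set.mem_setOf_eq, this]
      exact hb_indep
    set N : Set (Fin (k + 1) → {x : E // x ≠ 0}) :=
      (fun w : Fin (k + 1) → {x : E // x ≠ 0} => fun i => (w i).1) ⁻¹' (N₁ ∩ A) with hNdef
    have hNopen : IsOpen N := by
      refine ((hN₁.inter hAopen).preimage ?_)
      exact continuous_pi fun i => continuous_subtype_val.comp (continuous_apply i)
    have hvN : v ∈ N := ⟨hvN₁ rfl, hvA⟩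
    -- the relatively open neighborhood
    refine mem_nhdsWithin.2 ⟨mkP E k '' N, aux_isOpenMap_mkP k N hNopen, ⟨v, hvN, hvp⟩, ?_⟩
    rintro q ⟨⟨w, hwN, rfl⟩, hq⟩
    obtain ⟨hwN₁, hwA⟩ := hwN
    set u' : Fin (k + 1) → E := fun i => (w i).1 with hu'
    set f' : b → E := fun x => u' (g x) with hf'
    have hf'ind : LinearIndependent ℝ f' := hwA
    have hle : Submodule.span ℝ (Set.range f') ≤ spanMap E k (mkP E k w) := by
      rw [spanMap_mkP]
      refine Submodule.span_le.2 ?_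
      rintro _ ⟨x, rfl⟩
      exact Submodule.subset_span (Set.mem_range_self _)
    have hcard : finrank ℝ (Submodule.span ℝ (Set.range f')) = Fintype.card b :=
      finrank_span_eq_card hf'ind
    have hcardb : Fintype.card b = m := by
      have h1 : finrank ℝ (spanMap E k p) = Fintype.card b := by
        rw [← hbW]
        exact finrank_span_eq_card hb_indep
      rw [← h1]; exact hp
    have hqm : finrank ℝ (spanMap E k (mkP E k w)) = m := hq
    have heq : Submodule.span ℝ (Set.range f') = spanMap E k (mkP E k w) :=
      Submodule.eq_of_le_of_finrank_le hle (by rw [hcard, hcardb, hqm])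
    show (spanMap E k (mkP E k w) : Set E) ∩ K = ∅
    rw [← heq]
    by_contra hne
    obtain ⟨y, hyS, hyK⟩ := Set.inter_nonempty.1 (Set.nonempty_iff_ne_empty.2 hne)
    have hyO : ((u', y) : (Fin (k + 1) → E) × E) ∈ O :=
      hsub (Set.mk_mem_prod hwN₁ (hKN₂ hyK))
    have := linearIndependent_option'.1 hyO
    exact this.2 hyS

end Aux

/-- The span map is continuous on the set `X_{k,l}` of tuples of lines spanning
an `(l+1)`-dimensional subspace, and consequently Borel measurable as a map
`ℙ(V)^{k+1} → Gr(V)`. -/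
theorem stmt13 (E : Type*) [NormedAddCommGroup E] [NormedSpace ℝ E]
    [FiniteDimensional ℝ E] (k l : ℕ)
    (hl : l ≤ k) (hk : k ≤ finrank ℝ E - 1) :
    @ContinuousOn (Fin (k + 1) → Projectivization ℝ E) (Submodule ℝ E) _
      (fellTopologyGr E) (spanMap E k)
      {p | finrank ℝ (spanMap E k p) = l + 1} ∧
    @Measurable (Fin (k + 1) → Projectivization ℝ E) (Submodule ℝ E)
      (borel _) (@borel _ (fellTopologyGr E)) (spanMap E k) := by
  constructor
  · exact aux_continuousOn k (l + 1)
  · letI : MeasurableSpace (Fin (k + 1) → Projectivization ℝ E) := borel _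
    refine measurable_generateFrom ?_
    intro t ht
    have hmeas_open : ∀ s : Set (Fin (k + 1) → Projectivization ℝ E), IsOpen s →
        @MeasurableSet _ (borel _) s := fun s hs =>
      MeasurableSpace.measurableSet_generateFrom hs
    have hSm : ∀ m : ℕ, @MeasurableSet _ (borel _)
        {p : Fin (k + 1) → Projectivization ℝ E | finrank ℝ (spanMap E k p) = m} := by
      intro m
      have : {p : Fin (k + 1) → Projectivization ℝ E | finrank ℝ (spanMap E k p) = m} =
          {p | m ≤ finrank ℝ (spanMap E k p)} \ {p | m + 1 ≤ finrank ℝ (spanMap E k p)} := by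
        ext p; simp only [Set.mem_setOf_eq, Set.mem_diff]; omega
      rw [this]
      exact (hmeas_open _ (aux_isOpen_rank_ge k m)).diff
        (hmeas_open _ (aux_isOpen_rank_ge k (m + 1)))
    have key : spanMap E k ⁻¹' t =
        ⋃ m : ℕ, (spanMap E k ⁻¹' t ∩
          {p : Fin (k + 1) → Projectivization ℝ E | finrank ℝ (spanMap E k p) = m}) := by
      ext p
      simp only [Set.mem_iUnion, Set.mem_inter_iff, Set.mem_setOf_eq, Set.mem_preimage]
      exact ⟨fun h => ⟨finrank ℝ (spanMap E k p), h, rfl⟩, fun ⟨m, h, _⟩ => h⟩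
    rw [key]
    refine MeasurableSet.iUnion fun m => ?_
    obtain ⟨u, hu, huu⟩ :=
      (@continuousOn_iff' _ _ _ (fellTopologyGr E) _ _).1 (aux_continuousOn k m) t ht
    rw [huu]
    exact (hmeas_open u hu).inter (hSm m)
end
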